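/- arXiv:1901.03646 — 4 statements merged into one kernel-verified Lean document; each statement's English description precedes it below -/
import Mathlib

section
/- Sup-convolution preserves the subsolution inequality at points of twice differentiability: Let Ω ⊂ ℝⁿ, n ≥ 1, be open, 𝒰 a nonempty open subset of Ω̄ × ℝ × ℝⁿ × Symₙ and F ∈ C⁰(𝒰̄). Let ψ₁ ∈ USC(Ω;ℝ), bounded above, satisfy F(x,J₂[ψ₁]) ≥ 1 in Ω in the viscosity sense. For ε > 0 define the sup-convolution ψ̂_ε(x) := sup_{y∈Ω} ( ψ₁(y) - |x-y|²/ε ). Suppose x ∈ Ω is a point at which ψ̂_ε is punctually second order differentiable with data (∇ψ̂_ε(x), ∇²ψ̂_ε(x)), and x* ∈ Ω is a point realizing the supremum, i.e. ψ̂_ε(x) = ψ₁(x*) - |x - x*|²/ε. Then (x*, ψ̂_ε(x) + |x*-x|²/ε, ∇ψ̂_ε(x), ∇²ψ̂_ε(x)) ∈ 𝒰̄ and F(x*, ψ̂_ε(x) + |x*-x|²/ε, ∇ψ̂_ε(x), ∇²ψ̂_ε(x)) ≥ 1. -/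
open Filter Set Metric Topology Asymptotics MeasureTheory Matrix
open scoped Classical ENNReal NNReal

noncomputable section

abbrev En (n : ℕ) := EuclideanSpace ℝ (Fin n)
abbrev Matn (n : ℕ) := Matrix (Fin n) (Fin n) ℝ

/-- Frobenius norm of a matrix. -/
def frobNorm {n : ℕ} (M : Matn n) : ℝ :=
  Real.sqrt (∑ i, ∑ j, (M i j) ^ 2)

/-- The gradient of `φ` at `x`, as a vector in `ℝⁿ`. -/
def gradVec {n : ℕ} (φ : En n → ℝ) (x : En n) : En n :=
  WithLp.toLp 2 (fun i => fderiv ℝ φ x (EuclideanSpace.single i 1))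

/-- The Hessian matrix of `φ` at `x`. -/
def hessMat {n : ℕ} (φ : En n → ℝ) (x : En n) : Matn n :=
  fun i j => fderiv ℝ (fun y => fderiv ℝ φ y (EuclideanSpace.single j 1)) x
    (EuclideanSpace.single i 1)

/-- `g ∈ C^{1,1}_loc(Ω)`: differentiable with locally Lipschitz gradient. -/
def C11LocOn {n : ℕ} (Ω : Set (En n)) (g : En n → ℝ) : Prop :=
  (∀ x ∈ Ω, DifferentiableAt ℝ g x) ∧
  ∀ x ∈ Ω, ∃ ε > 0, ∃ K : ℝ≥0, LipschitzOnWith K (fun y => fderiv ℝ g y) (ball x ε ∩ Ω)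

/-- `g ∈ C^{1,1}(S)`: differentiable with Lipschitz gradient on `S`. -/
def C11On {n : ℕ} (S : Set (En n)) (g : En n → ℝ) : Prop :=
  DifferentiableOn ℝ g S ∧ ∃ K : ℝ≥0, LipschitzOnWith K (fun y => fderivWithin ℝ g S y) S

/-- `ψ` is punctually second order differentiable at `x` with jet `(ψ x, p, M)`. -/
def HasJet2At {n : ℕ} (ψ : En n → ℝ) (x : En n) (p : En n) (M : Matn n) : Prop :=
  M.IsSymm ∧
  (fun z : En n => ψ (x + z) - ψ x - (∑ i, p i * z i) - (1 / 2) * ∑ i, ∑ j, M i j * z i * z j)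
    =o[𝓝 0] fun z : En n => ‖z‖ ^ 2

/-- The slice `𝒰ₓ`. -/
def Uslice {n : ℕ} (𝒰 : Set (En n × ℝ × En n × Matn n)) (x : En n) :
    Set (ℝ × En n × Matn n) :=
  {t | (x, t.1, t.2.1, t.2.2) ∈ 𝒰}

/-- `𝒰` is a nonempty (relatively) open subset of `Ω̄ × ℝ × ℝⁿ × Symₙ`. -/
def UAdmissible {n : ℕ} (Ω : Set (En n)) (𝒰 : Set (En n × ℝ × En n × Matn n)) : Prop :=
  𝒰.Nonempty ∧ (∀ q ∈ 𝒰, q.1 ∈ closure Ω ∧ (q.2.2.2).IsSymm) ∧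
  ∃ V : Set (En n × ℝ × En n × Matn n), IsOpen V ∧
    𝒰 = V ∩ {q | q.1 ∈ closure Ω ∧ (q.2.2.2).IsSymm}

/-- Condition (i): `(F,𝒰)` is elliptic. -/
def EllipticU {n : ℕ} (𝒰 : Set (En n × ℝ × En n × Matn n))
    (F : En n × ℝ × En n × Matn n → ℝ) : Prop :=
  ∀ x s (p : En n) (M : Matn n), (x, s, p, M) ∈ 𝒰 → ∀ N : Matn n, N.PosSemidef →
    (x, s, p, M + N) ∈ 𝒰 ∧ F (x, s, p, M) ≤ F (x, s, p, M + N)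

/-- Condition (ii): `F < 1` on `∂𝒰ₓ` for all `x ∈ Ω̄`. -/
def SuplevelStrict {n : ℕ} (Ω : Set (En n)) (𝒰 : Set (En n × ℝ × En n × Matn n))
    (F : En n × ℝ × En n × Matn n → ℝ) : Prop :=
  ∀ x ∈ closure Ω, ∀ t ∈ closure (Uslice 𝒰 x), t ∉ Uslice 𝒰 x →
    F (x, t.1, t.2.1, t.2.2) < 1

/-- Condition (ii'): `F ≤ 1` on `∂𝒰ₓ` for all `x ∈ Ω̄`. -/
def SuplevelWeak {n : ℕ} (Ω : Set (En n)) (𝒰 : Set (En n × ℝ × En n × Matn n))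
    (F : En n × ℝ × En n × Matn n → ℝ) : Prop :=
  ∀ x ∈ closure Ω, ∀ t ∈ closure (Uslice 𝒰 x), t ∉ Uslice 𝒰 x →
    F (x, t.1, t.2.1, t.2.2) ≤ 1

/-- Condition (iii): local strict ellipticity. -/
def LocStrictEllU {n : ℕ} (𝒰 : Set (En n × ℝ × En n × Matn n))
    (F : En n × ℝ × En n × Matn n → ℝ) : Prop :=
  ∀ 𝒦 : Set (En n × ℝ × En n × Matn n), 𝒦 ⊆ 𝒰 → IsCompact 𝒦 →
    ∃ δ > 0, ∀ x s (p : En n) (M : Matn n), (x, s, p, M) ∈ 𝒦 → ∀ N : Matn n, N.PosSemidef →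
      δ * frobNorm N ≤ F (x, s, p, M + N) - F (x, s, p, M)

/-- Condition (iv): local Lipschitz continuity in `(s,p,M)`. -/
def LocLipU {n : ℕ} (𝒰 : Set (En n × ℝ × En n × Matn n))
    (F : En n × ℝ × En n × Matn n → ℝ) : Prop :=
  ∀ 𝒦 : Set (En n × ℝ × En n × Matn n), 𝒦 ⊆ 𝒰 → IsCompact 𝒦 →
    ∃ C > 0, ∀ x s (p : En n) (M : Matn n) s' (p' : En n) (M' : Matn n),
      (x, s, p, M) ∈ 𝒦 → (x, s', p', M') ∈ 𝒦 →
      |F (x, s, p, M) - F (x, s', p', M')| ≤ C * (|s - s'| + ‖p - p'‖ + frobNorm (M - M'))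

/-- `F(x, J₂[ψ]) ≥ c` in `Ω` in the viscosity sense. -/
def ViscGe {n : ℕ} (Ω : Set (En n)) (𝒰 : Set (En n × ℝ × En n × Matn n))
    (F : En n × ℝ × En n × Matn n → ℝ) (c : ℝ) (ψ : En n → EReal) : Prop :=
  ∀ x₀ ∈ Ω, ∀ φ : En n → ℝ, ContDiffOn ℝ 2 φ Ω → ψ x₀ = (φ x₀ : EReal) →
    (∀ᶠ x in 𝓝[Ω] x₀, ψ x ≤ (φ x : EReal)) →
    (x₀, φ x₀, gradVec φ x₀, hessMat φ x₀) ∈ closure 𝒰 ∧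
      c ≤ F (x₀, φ x₀, gradVec φ x₀, hessMat φ x₀)

/-- `F(x, J₂[ψ]) ≤ c` in `Ω` in the viscosity sense. -/
def ViscLe {n : ℕ} (Ω : Set (En n)) (𝒰 : Set (En n × ℝ × En n × Matn n))
    (F : En n × ℝ × En n × Matn n → ℝ) (c : ℝ) (ψ : En n → EReal) : Prop :=
  ∀ x₀ ∈ Ω, ∀ φ : En n → ℝ, ContDiffOn ℝ 2 φ Ω → ψ x₀ = (φ x₀ : EReal) →
    (∀ᶠ x in 𝓝[Ω] x₀, (φ x : EReal) ≤ ψ x) →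
    ((x₀, φ x₀, gradVec φ x₀, hessMat φ x₀) ∉ closure 𝒰 ∨
      F (x₀, φ x₀, gradVec φ x₀, hessMat φ x₀) ≤ c)

/-- The eigenvalues of a (symmetric) matrix, listed with multiplicity in
nondecreasing order; junk value `0` if the matrix is not symmetric. -/
def eigs {n : ℕ} (M : Matn n) : En n :=
  if h : M.IsHermitian then WithLp.toLp 2 (fun i => h.eigenvalues (Tuple.sort h.eigenvalues i)) else 0

/-- The conformal Hessian `A^u`. -/
def confHess {n : ℕ} (u : En n → ℝ) (x : En n) : Matn n :=
  fun i j =>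
    -(2 / ((n : ℝ) - 2)) * (u x) ^ (-((n : ℝ) + 2) / ((n : ℝ) - 2)) * hessMat u x i j
    + (2 * (n : ℝ) / ((n : ℝ) - 2) ^ 2) * (u x) ^ (-(2 * (n : ℝ)) / ((n : ℝ) - 2)) *
        (gradVec u x i * gradVec u x j)
    - (2 / ((n : ℝ) - 2) ^ 2) * (u x) ^ (-(2 * (n : ℝ)) / ((n : ℝ) - 2)) *
        (∑ k, (gradVec u x k) ^ 2) * (if i = j then (1 : ℝ) else 0)

/-- Condition (1): `(f,Γ)` is symmetric. -/
def SymmCond {n : ℕ} (Γ : Set (En n)) (f : En n → ℝ) : Prop :=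
  ∀ l ∈ Γ, ∀ σ : Equiv.Perm (Fin n),
    WithLp.toLp 2 (fun i => l (σ i)) ∈ Γ ∧ f (WithLp.toLp 2 (fun i => l (σ i))) = f l

/-- Condition (2): `(f,Γ)` is elliptic. -/
def EllCond {n : ℕ} (Γ : Set (En n)) (f : En n → ℝ) : Prop :=
  ∀ l ∈ Γ, ∀ μ : En n, (∀ i, 0 ≤ μ i) → l + μ ∈ Γ ∧ f l ≤ f (l + μ)

/-- Condition (3): local strict ellipticity. -/
def StrictEllCond {n : ℕ} (Γ : Set (En n)) (f : En n → ℝ) : Prop :=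
  ∀ K : Set (En n), K ⊆ Γ → IsCompact K →
    ∃ δ > 0, ∀ l ∈ K, ∀ μ : En n, (∀ i, 0 ≤ μ i) → δ * ‖μ‖ ≤ f (l + μ) - f l

/-- Condition (4): local Lipschitz continuity. -/
def LipCond {n : ℕ} (Γ : Set (En n)) (f : En n → ℝ) : Prop :=
  ∀ K : Set (En n), K ⊆ Γ → IsCompact K →
    ∃ C > 0, ∀ l ∈ K, ∀ l' ∈ K, |f l - f l'| ≤ C * ‖l - l'‖

/-- Condition (5): the `1`-superlevel set of `f` stays in `Γ`. -/
def LevelCond {n : ℕ} (Γ : Set (En n)) (f : En n → ℝ) : Prop :=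
  {l ∈ closure Γ | 1 ≤ f l} ⊆ Γ

/-- Condition (6): `Γ ⊆ Γ₁`. -/
def TraceCond {n : ℕ} (Γ : Set (En n)) : Prop :=
  ∀ l ∈ Γ, 0 < ∑ i, l i

/-- `u` is a viscosity subsolution of `f(λ(A^u)) = 1` in `Ω`. -/
def ConfViscSub {n : ℕ} (Ω : Set (En n)) (Γ : Set (En n)) (f : En n → ℝ)
    (u : En n → ℝ) : Prop :=
  ∀ x₀ ∈ Ω, ∀ φ : En n → ℝ, ContDiffOn ℝ 2 φ Ω → (∀ x ∈ Ω, 0 < φ x) →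
    φ x₀ = u x₀ → (∀ᶠ x in 𝓝[Ω] x₀, φ x ≤ u x) →
    eigs (confHess φ x₀) ∈ closure Γ ∧ 1 ≤ f (eigs (confHess φ x₀))

/-- `u` is a viscosity supersolution of `f(λ(A^u)) = 1` in `Ω`. -/
def ConfViscSup {n : ℕ} (Ω : Set (En n)) (Γ : Set (En n)) (f : En n → ℝ)
    (u : En n → EReal) : Prop :=
  ∀ x₀ ∈ Ω, ∀ φ : En n → ℝ, ContDiffOn ℝ 2 φ Ω → (∀ x ∈ Ω, 0 < φ x) →
    (φ x₀ : EReal) = u x₀ → (∀ᶠ x in 𝓝[Ω] x₀, u x ≤ (φ x : EReal)) →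
    (eigs (confHess φ x₀) ∉ closure Γ ∨ f (eigs (confHess φ x₀)) ≤ 1)

/-- The Kelvin-type transform `w_{x,λ}`. -/
def kelvin {n : ℕ} (w : En n → ℝ) (x : En n) (l : ℝ) (y : En n) : ℝ :=
  (l ^ (n - 2) / ‖y - x‖ ^ (n - 2)) * w (x + (l ^ 2 / ‖y - x‖ ^ 2) • (y - x))


/-! ### Auxiliary lemmas for the sup-convolution theorem -/

lemma normSqEq {n : ℕ} (z : En n) : ‖z‖ ^ 2 = ∑ i, (z i) * (z i) := by
  rw [EuclideanSpace.norm_eq, Real.sq_sqrt (by positivity)]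
  simp [Real.norm_eq_abs, sq_abs, sq]

/-- The quadratic test function built from a second-order jet. -/
def tf {n : ℕ} (m : En n) (s δ : ℝ) (p : En n) (M : Matn n) (y : En n) : ℝ :=
  s + (∑ i, p i * (y i - m i))
    + (1/2) * (∑ i, ∑ j, M i j * (y i - m i) * (y j - m j))
    + δ * ∑ i, (y i - m i) * (y i - m i)

lemma hzAux {n : ℕ} (m : En n) (i : Fin n) (y : En n) :
    HasFDerivAt (fun y : En n => y i - m i)
      (EuclideanSpace.proj (𝕜 := ℝ) i) y :=
  (EuclideanSpace.proj (𝕜 := ℝ) (i := i)).hasFDerivAt.sub_const (m i)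

lemma tf_hasFDerivAt {n : ℕ} (m : En n) (s δ : ℝ) (p : En n) (M : Matn n) (y : En n) :
    HasFDerivAt (tf m s δ p M)
      (((∑ i, p i • (EuclideanSpace.proj (𝕜 := ℝ) i : En n →L[ℝ] ℝ)) +
        (1/2 : ℝ) • (∑ i, ∑ j, M i j •
          ((y i - m i) • (EuclideanSpace.proj (𝕜 := ℝ) j : En n →L[ℝ] ℝ)
            + (y j - m j) • (EuclideanSpace.proj (𝕜 := ℝ) i : En n →L[ℝ] ℝ)))) +
        δ • (∑ i, ((y i - m i) • (EuclideanSpace.proj (𝕜 := ℝ) i : En n →L[ℝ] ℝ)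
            + (y i - m i) • (EuclideanSpace.proj (𝕜 := ℝ) i : En n →L[ℝ] ℝ)))) y := by
  have hA : HasFDerivAt (fun y : En n => s + ∑ i, p i * (y i - m i))
      (∑ i, p i • (EuclideanSpace.proj (𝕜 := ℝ) i : En n →L[ℝ] ℝ)) y :=
    ((HasFDerivAt.fun_sum (fun i _ => (hzAux m i y).const_mul (p i))).const_add s)
  have hB : HasFDerivAt (fun y : En n => (1/2 : ℝ) *
      (∑ i, ∑ j, M i j * (y i - m i) * (y j - m j)))
      ((1/2 : ℝ) • (∑ i, ∑ j, M i j •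
        ((y i - m i) • (EuclideanSpace.proj (𝕜 := ℝ) j : En n →L[ℝ] ℝ)
          + (y j - m j) • (EuclideanSpace.proj (𝕜 := ℝ) i : En n →L[ℝ] ℝ)))) y := by
    refine HasFDerivAt.const_mul ?_ _
    refine HasFDerivAt.fun_sum (fun i _ => HasFDerivAt.fun_sum (fun j _ => ?_))
    have := ((hzAux m i y).mul (hzAux m j y)).const_mul (M i j)
    simpa [mul_assoc, smul_add] using this
  have hC : HasFDerivAt (fun y : En n => δ * ∑ i, (y i - m i) * (y i - m i))
      (δ • (∑ i, ((y i - m i) • (EuclideanSpace.proj (𝕜 := ℝ) i : En n →L[ℝ] ℝ)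
          + (y i - m i) • (EuclideanSpace.proj (𝕜 := ℝ) i : En n →L[ℝ] ℝ)))) y :=
    HasFDerivAt.const_mul (HasFDerivAt.fun_sum (fun i _ => (hzAux m i y).mul (hzAux m i y))) δ
  exact (hA.add hB).add hC

lemma tf_fderiv_apply {n : ℕ} (m : En n) (s δ : ℝ) (p : En n) (M : Matn n)
    (hM : M.IsSymm) (y : En n) (j : Fin n) :
    fderiv ℝ (tf m s δ p M) y (EuclideanSpace.single j 1)
      = p j + (∑ k, M j k * (y k - m k)) + 2 * δ * (y j - m j) := by
  rw [(tf_hasFDerivAt m s δ p M y).fderiv]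
  have hproj : ∀ i : Fin n, (EuclideanSpace.proj (𝕜 := ℝ) i : En n →L[ℝ] ℝ)
      (EuclideanSpace.single j 1) = if i = j then (1:ℝ) else 0 := by
    intro i; simp [EuclideanSpace.single_apply]
  simp only [ContinuousLinearMap.add_apply, ContinuousLinearMap.smul_apply,
    ContinuousLinearMap.sum_apply, hproj, smul_eq_mul, mul_ite, mul_one, mul_zero,
    Finset.sum_ite_eq', Finset.mem_univ, if_true]
  have hsym : ∀ k, M k j = M j k := fun k => (Matrix.IsSymm.apply hM j k).symm ▸ rfl
  simp only [mul_add, mul_ite, mul_zero, Finset.sum_add_distrib, Finset.sum_ite_eq',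
    Finset.mem_univ, if_true]
  simp_rw [hsym]
  have : (∑ x : Fin n, ∑ x_1 : Fin n, if x = j then M x x_1 * (y x_1 - m x_1) else 0)
      = ∑ x_1 : Fin n, M j x_1 * (y x_1 - m x_1) := by
    rw [Finset.sum_comm]; simp
  rw [this]; ring

lemma tf_grad {n : ℕ} (m : En n) (s δ : ℝ) (p : En n) (M : Matn n) (hM : M.IsSymm) :
    gradVec (tf m s δ p M) m = p := by
  refine PiLp.ext fun j => ?_
  show fderiv ℝ (tf m s δ p M) m (EuclideanSpace.single j 1) = p j
  rw [tf_fderiv_apply m s δ p M hM m j]; simp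

lemma tf_hess {n : ℕ} (m : En n) (s δ : ℝ) (p : En n) (M : Matn n) (hM : M.IsSymm) :
    hessMat (tf m s δ p M) m = M + (2*δ) • (1 : Matn n) := by
  funext i j
  show fderiv ℝ (fun y => fderiv ℝ (tf m s δ p M) y (EuclideanSpace.single j 1)) m
      (EuclideanSpace.single i 1) = _
  have hfun : (fun y => fderiv ℝ (tf m s δ p M) y (EuclideanSpace.single j 1))
      = fun y => p j + (∑ k, M j k * (y k - m k)) + 2 * δ * (y j - m j) :=
    funext (fun y => tf_fderiv_apply m s δ p M hM y j)
  rw [hfun]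
  have hd : HasFDerivAt (fun y : En n => p j + (∑ k, M j k * (y k - m k)) + 2 * δ * (y j - m j))
      ((∑ k, M j k • (EuclideanSpace.proj (𝕜 := ℝ) k : En n →L[ℝ] ℝ))
        + (2*δ) • (EuclideanSpace.proj (𝕜 := ℝ) j : En n →L[ℝ] ℝ)) m :=
    ((HasFDerivAt.fun_sum (fun k _ => (hzAux m k m).const_mul (M j k))).const_add (p j)).add
      ((hzAux m j m).const_mul (2*δ))
  rw [hd.fderiv]
  have hproj : ∀ k : Fin n, (EuclideanSpace.proj (𝕜 := ℝ) k : En n →L[ℝ] ℝ)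
      (EuclideanSpace.single i 1) = if k = i then (1:ℝ) else 0 := by
    intro k; simp [EuclideanSpace.single_apply]
  simp only [ContinuousLinearMap.add_apply, ContinuousLinearMap.smul_apply,
    ContinuousLinearMap.sum_apply, hproj, smul_eq_mul, mul_ite, mul_one, mul_zero,
    Finset.sum_ite_eq', Finset.mem_univ, if_true]
  have hMji : M j i = M i j := by rw [← Matrix.IsSymm.apply hM i j]
  rw [hMji]
  by_cases h : i = j <;>
    simp [Matrix.add_apply, Matrix.smul_apply, Matrix.one_apply, h, eq_comm]

lemma tf_contDiff {n : ℕ} (m : En n) (s δ : ℝ) (p : En n) (M : Matn n) :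
    ContDiff ℝ 2 (tf m s δ p M) := by
  have hci : ∀ i : Fin n, ContDiff ℝ 2 (fun y : En n => y i - m i) := fun i =>
    ((EuclideanSpace.proj (𝕜 := ℝ) i : En n →L[ℝ] ℝ).contDiff).sub contDiff_const
  exact ((contDiff_const.add (ContDiff.sum fun i _ => contDiff_const.mul (hci i))).add
      (contDiff_const.mul (ContDiff.sum fun i _ => ContDiff.sum fun j _ =>
        (contDiff_const.mul (hci i)).mul (hci j)))).add
      (contDiff_const.mul (ContDiff.sum fun i _ => (hci i).mul (hci i)))

/-- Sup-convolution preserves the subsolution inequality at points of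
punctual second order differentiability. -/
theorem supconvolution_subsolution {n : ℕ} (hn : 1 ≤ n)
    (Ω : Set (En n)) (hΩo : IsOpen Ω)
    (𝒰 : Set (En n × ℝ × En n × Matn n)) (h𝒰 : UAdmissible Ω 𝒰)
    (F : En n × ℝ × En n × Matn n → ℝ) (hFc : ContinuousOn F (closure 𝒰))
    (ψ₁ : En n → ℝ)
    (hψ₁usc : UpperSemicontinuousOn ψ₁ Ω) (hψ₁bdd : BddAbove (ψ₁ '' Ω))
    (hsub : ViscGe Ω 𝒰 F 1 (fun x => (ψ₁ x : EReal)))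
    (ε : ℝ) (hε : 0 < ε)
    (ψhat : En n → ℝ)
    (hhat : ∀ x, ψhat x = sSup {v : ℝ | ∃ y ∈ Ω, v = ψ₁ y - ‖x - y‖ ^ 2 / ε})
    (x : En n) (hx : x ∈ Ω)
    (p : En n) (M : Matn n) (hjet : HasJet2At ψhat x p M)
    (xstar : En n) (hxstar : xstar ∈ Ω)
    (hrealize : ψhat x = ψ₁ xstar - ‖x - xstar‖ ^ 2 / ε) :
    (xstar, ψhat x + ‖xstar - x‖ ^ 2 / ε, p, M) ∈ closure 𝒰 ∧
      1 ≤ F (xstar, ψhat x + ‖xstar - x‖ ^ 2 / ε, p, M) := by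
  obtain ⟨hMsymm, hlo⟩ := hjet
  set s : ℝ := ψhat x + ‖xstar - x‖ ^ 2 / ε with hs
  have hbdd : ∀ x' : En n, BddAbove {v : ℝ | ∃ y ∈ Ω, v = ψ₁ y - ‖x' - y‖ ^ 2 / ε} := by
    obtain ⟨C, hC⟩ := hψ₁bdd
    intro x'
    refine ⟨C, ?_⟩
    rintro v ⟨y, hy, rfl⟩
    have h1 : ψ₁ y ≤ C := hC ⟨y, hy, rfl⟩
    have h2 : 0 ≤ ‖x' - y‖ ^ 2 / ε := by positivity
    linarith
  have key : ∀ δ : ℝ, 0 < δ →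
      (xstar, s, p, M + (2*δ) • (1 : Matn n)) ∈ closure 𝒰 ∧
        1 ≤ F (xstar, s, p, M + (2*δ) • (1 : Matn n)) := by
    intro δ hδ
    set φ := tf xstar s δ p M with hφ
    have hval : φ xstar = s := by simp [hφ, tf]
    have heq : ((ψ₁ xstar : EReal)) = ((φ xstar : ℝ) : EReal) := by
      rw [hval]
      norm_cast
      have h1 : ψ₁ xstar = ψhat x + ‖x - xstar‖ ^ 2 / ε := by linarith [hrealize]
      rw [h1, hs, norm_sub_rev]
    have h2 : ∀ᶠ z in 𝓝 (0 : En n),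
        ψhat (x + z) ≤ ψhat x + (∑ i, p i * z i)
          + (1/2) * (∑ i, ∑ j, M i j * z i * z j) + δ * ‖z‖ ^ 2 := by
      filter_upwards [hlo.bound hδ] with z hzb
      have hb : |ψhat (x + z) - ψhat x - (∑ i, p i * z i)
          - (1/2) * ∑ i, ∑ j, M i j * z i * z j| ≤ δ * ‖z‖ ^ 2 := by
        have hnn : ‖‖z‖ ^ 2‖ = ‖z‖ ^ 2 := by
          rw [Real.norm_eq_abs, abs_of_nonneg (by positivity)]
        simpa [Real.norm_eq_abs, hnn] using hzb
      have := (abs_le.mp hb).2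
      linarith
    have htend : Tendsto (fun y : En n => y - xstar) (𝓝[Ω] xstar) (𝓝 0) := by
      have h0 : Tendsto (fun y : En n => y - xstar) (𝓝 xstar) (𝓝 (xstar - xstar)) :=
        (continuous_id.sub continuous_const).tendsto xstar
      simpa using h0.mono_left nhdsWithin_le_nhds
    have hev : ∀ᶠ y in 𝓝[Ω] xstar, ((ψ₁ y : EReal)) ≤ ((φ y : ℝ) : EReal) := by
      filter_upwards [htend.eventually h2, self_mem_nhdsWithin] with y h2y hyΩ
      have h1 : ψ₁ y ≤ ψhat (x + (y - xstar)) + ‖x - xstar‖ ^ 2 / ε := by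
        have hmem : ψ₁ y - ‖(x + (y - xstar)) - y‖ ^ 2 / ε ∈
            {v : ℝ | ∃ y' ∈ Ω, v = ψ₁ y' - ‖(x + (y - xstar)) - y'‖ ^ 2 / ε} :=
          ⟨y, hyΩ, rfl⟩
        have hle := le_csSup (hbdd _) hmem
        rw [← hhat] at hle
        have hno : (x + (y - xstar)) - y = x - xstar := by abel
        rw [hno] at hle
        linarith
      have hφy : φ y = s + (∑ i, p i * (y - xstar) i)
          + (1/2) * (∑ i, ∑ j, M i j * (y - xstar) i * (y - xstar) j)
          + δ * ‖y - xstar‖ ^ 2 := by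
        rw [normSqEq]
        simp [hφ, tf, PiLp.sub_apply]
      have hsx : ‖x - xstar‖ = ‖xstar - x‖ := norm_sub_rev _ _
      rw [EReal.coe_le_coe_iff, hφy, hs]
      rw [hsx] at h1
      linarith
    have hres := hsub xstar hxstar φ ((tf_contDiff _ _ _ _ _).contDiffOn) heq hev
    rwa [hval, hφ, tf_grad _ _ _ _ _ hMsymm, tf_hess _ _ _ _ _ hMsymm] at hres
  have hQt : Tendsto (fun δ : ℝ => ((xstar, s, p, M + (2*δ) • (1 : Matn n)) :
      En n × ℝ × En n × Matn n)) (𝓝[>] 0) (𝓝 (xstar, s, p, M)) := by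
    have hQc : Continuous (fun δ : ℝ => ((xstar, s, p, M + (2*δ) • (1 : Matn n)) :
        En n × ℝ × En n × Matn n)) := by
      refine continuous_const.prodMk (continuous_const.prodMk
        (continuous_const.prodMk ?_))
      exact continuous_const.add
        (((continuous_const.mul continuous_id).smul continuous_const))
    have h0 := hQc.tendsto 0
    simp only [mul_zero, zero_smul, add_zero] at h0
    exact h0.mono_left nhdsWithin_le_nhds
  have hevδ : ∀ᶠ δ in 𝓝[>] (0:ℝ),
      (xstar, s, p, M + (2*δ) • (1 : Matn n)) ∈ closure 𝒰 ∧
        1 ≤ F (xstar, s, p, M + (2*δ) • (1 : Matn n)) := by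
    filter_upwards [self_mem_nhdsWithin] with δ hδ using key δ hδ
  have hmem : ((xstar, s, p, M) : En n × ℝ × En n × Matn n) ∈ closure 𝒰 :=
    isClosed_closure.mem_of_tendsto hQt (hevδ.mono fun δ h => h.1)
  refine ⟨hmem, ?_⟩
  have hcw : ContinuousWithinAt F (closure 𝒰) (xstar, s, p, M) := hFc _ hmem
  have htF : Tendsto (fun δ : ℝ => F (xstar, s, p, M + (2*δ) • (1 : Matn n)))
      (𝓝[>] 0) (𝓝 (F (xstar, s, p, M))) :=
    hcw.tendsto.comp (tendsto_nhdsWithin_iff.mpr ⟨hQt, hevδ.mono fun δ h => h.1⟩)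
  exact ge_of_tendsto htF (hevδ.mono fun δ h => h.2)
end
end

section
/- Local strict ellipticity transfers from the symmetric function to the matrix operator: Let Γ ⊂ ℝⁿ be a nonempty open set and f ∈ C⁰(Γ̄) satisfy the symmetry condition (1), the ellipticity condition (2) and the local strict ellipticity condition (3). Define U := {M ∈ Symₙ : λ(M) ∈ Γ} and F(M) := f(λ(M)). Then for every compact subset K of U there is a constant δ(K) > 0 such that F(M+N) - F(M) ≥ δ(K)|N| for all M ∈ K and all positive semidefinite N ∈ Symₙ, where |N| denotes the Frobenius norm. -/
open Filter Set Metric Topology Asymptotics MeasureTheory Matrix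
open scoped Classical ENNReal NNReal

noncomputable section

section EigsHelpers

open Finset

variable {n : ℕ}

local notation "σ" hM => Tuple.sort (Matrix.IsHermitian.eigenvalues hM)

lemma eigs_eq {M : Matn n} (hM : M.IsHermitian) :
    eigs M = fun i => hM.eigenvalues (Tuple.sort hM.eigenvalues i) := by
  rw [eigs, dif_pos hM]

lemma eigs_monotone {M : Matn n} (hM : M.IsHermitian) : Monotone (eigs M) := by
  rw [eigs_eq hM]; exact Tuple.monotone_sort hM.eigenvalues

/-- Sorted orthonormal eigenbasis. -/
noncomputable def sb {M : Matn n} (hM : M.IsHermitian) :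
    OrthonormalBasis (Fin n) ℝ (En n) :=
  hM.eigenvectorBasis.reindex (Tuple.sort hM.eigenvalues).symm

lemma sb_apply {M : Matn n} (hM : M.IsHermitian) (i : Fin n) :
    sb hM i = hM.eigenvectorBasis (Tuple.sort hM.eigenvalues i) := by
  simp [sb]

/-- Quadratic form of a matrix. -/
noncomputable def qf (M : Matn n) (x : En n) : ℝ :=
  inner (𝕜 := ℝ) x (Matrix.toEuclideanLin M x)

lemma toEuclideanLin_sb {M : Matn n} (hM : M.IsHermitian) (i : Fin n) :
    Matrix.toEuclideanLin M (sb hM i) = eigs M i • sb hM i := by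
  rw [sb_apply, eigs_eq]
  have h := hM.mulVec_eigenvectorBasis (Tuple.sort hM.eigenvalues i)
  apply (WithLp.equiv 2 (Fin n → ℝ)).injective
  simpa [Matrix.ofLp_toEuclideanLin_apply] using h

lemma qf_repr {M : Matn n} (hM : M.IsHermitian) (x : En n) :
    qf M x = ∑ i, eigs M i * ((sb hM).repr x i) ^ 2 := by
  set b := sb hM with hb
  have hsymm : (Matrix.toEuclideanLin M).IsSymmetric :=
    Matrix.isHermitian_iff_isSymmetric.1 hM
  have hrepr : ∀ y : En n, inner (𝕜 := ℝ) x y = ∑ i, b.repr x i * b.repr y i := by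
    intro y
    calc inner (𝕜 := ℝ) x y = inner (𝕜 := ℝ) (b.repr x) (b.repr y) :=
          (b.repr.inner_map_map x y).symm
      _ = ∑ i, b.repr x i * b.repr y i := by
          rw [PiLp.inner_apply]
          exact Finset.sum_congr rfl fun i _ => by
            simp [RCLike.inner_apply, starRingEnd_apply, star_trivial, mul_comm]
  rw [qf, hrepr]
  refine Finset.sum_congr rfl fun i _ => ?_
  have : b.repr (Matrix.toEuclideanLin M x) i = eigs M i * b.repr x i := by
    rw [b.repr_apply_apply, b.repr_apply_apply, ← hsymm (b i) x, toEuclideanLin_sb hM,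
      inner_smul_left]
    simp [mul_comm, hb]
  rw [this]; ring

lemma norm_sq_repr (b : OrthonormalBasis (Fin n) ℝ (En n)) (x : En n) :
    ‖x‖ ^ 2 = ∑ i, (b.repr x i) ^ 2 := by
  rw [← b.repr.norm_map x, EuclideanSpace.norm_eq, Real.sq_sqrt (by positivity)]
  simp [sq_abs]

lemma norm_sq_eq_sum (x : En n) : ‖x‖ ^ 2 = ∑ i, (x i) ^ 2 := by
  rw [EuclideanSpace.norm_eq, Real.sq_sqrt (by positivity)]
  simp [sq_abs]

lemma repr_eq_zero_of_mem_span (b : OrthonormalBasis (Fin n) ℝ (En n)) {S : Set (Fin n)}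
    {x : En n} (hx : x ∈ Submodule.span ℝ (b '' S)) {j : Fin n} (hj : j ∉ S) :
    b.repr x j = 0 := by
  rw [b.repr_apply_apply]
  have hle : Submodule.span ℝ (b '' S) ≤
      LinearMap.ker ((innerSL ℝ (b j)).toLinearMap) := by
    rw [Submodule.span_le]
    rintro - ⟨i, hi, rfl⟩
    have hne : j ≠ i := fun h => hj (h ▸ hi)
    have := b.orthonormal.2 hne
    simpa [LinearMap.mem_ker] using this
  simpa using hle hx

lemma qf_ge_of_mem_span {M : Matn n} (hM : M.IsHermitian) (k : Fin n) {x : En n}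
    (hx : x ∈ Submodule.span ℝ (sb hM '' Set.Ici k)) :
    eigs M k * ‖x‖ ^ 2 ≤ qf M x := by
  rw [qf_repr hM, norm_sq_repr (sb hM), Finset.mul_sum]
  refine Finset.sum_le_sum fun i _ => ?_
  by_cases hik : k ≤ i
  · have := eigs_monotone hM hik
    nlinarith [sq_nonneg ((sb hM).repr x i)]
  · rw [repr_eq_zero_of_mem_span (sb hM) hx (by simpa using hik)]
    simp

lemma qf_le_of_mem_span {M : Matn n} (hM : M.IsHermitian) (k : Fin n) {x : En n}
    (hx : x ∈ Submodule.span ℝ (sb hM '' Set.Iic k)) :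
    qf M x ≤ eigs M k * ‖x‖ ^ 2 := by
  rw [qf_repr hM, norm_sq_repr (sb hM), Finset.mul_sum]
  refine Finset.sum_le_sum fun i _ => ?_
  by_cases hik : i ≤ k
  · have := eigs_monotone hM hik
    nlinarith [sq_nonneg ((sb hM).repr x i)]
  · rw [repr_eq_zero_of_mem_span (sb hM) hx (by simpa using hik)]
    simp

lemma finrank_span_sb (b : OrthonormalBasis (Fin n) ℝ (En n)) (S : Finset (Fin n)) :
    Module.finrank ℝ (Submodule.span ℝ (b '' (S : Set (Fin n)))) = S.card := by
  have li : LinearIndependent ℝ (fun i : (S : Set (Fin n)) => b i) :=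
    b.orthonormal.linearIndependent.comp _ Subtype.val_injective
  have hrange : Set.range (fun i : (S : Set (Fin n)) => b i) = b '' (S : Set (Fin n)) := by
    ext y; simp
  rw [← hrange, finrank_span_eq_card li]
  simp

lemma exists_ne_zero_mem_inf {V W : Submodule ℝ (En n)}
    (h : n < Module.finrank ℝ V + Module.finrank ℝ W) :
    ∃ x : En n, x ≠ 0 ∧ x ∈ V ∧ x ∈ W := by
  have h1 := Submodule.finrank_sup_add_finrank_inf_eq V W
  have h2 : Module.finrank ℝ ↥(V ⊔ W) ≤ n := by
    have := Submodule.finrank_le (V ⊔ W)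
    simpa [finrank_euclideanSpace] using this
  have h3 : 0 < Module.finrank ℝ ↥(V ⊓ W) := by omega
  have hne : V ⊓ W ≠ ⊥ := by
    intro hbot
    rw [hbot, finrank_bot] at h3
    exact lt_irrefl 0 h3
  obtain ⟨x, hx, hx0⟩ := (Submodule.ne_bot_iff _).1 hne
  exact ⟨x, hx0, hx.1, hx.2⟩

lemma exists_test_vector {A B : Matn n} (hA : A.IsHermitian) (hB : B.IsHermitian)
    (k : Fin n) :
    ∃ x : En n, x ≠ 0 ∧ x ∈ Submodule.span ℝ (sb hA '' Set.Ici k) ∧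
      x ∈ Submodule.span ℝ (sb hB '' Set.Iic k) := by
  apply exists_ne_zero_mem_inf
  have e1 : (Finset.Ici k : Set (Fin n)) = Set.Ici k := by simp
  have e2 : (Finset.Iic k : Set (Fin n)) = Set.Iic k := by simp
  rw [← e1, ← e2, finrank_span_sb, finrank_span_sb, Fin.card_Ici, Fin.card_Iic]
  have := k.isLt
  omega

lemma eigs_le_eigs_of_qf_le {A B : Matn n} (hA : A.IsHermitian) (hB : B.IsHermitian)
    (k : Fin n) (h : ∀ x : En n, qf A x ≤ qf B x) : eigs A k ≤ eigs B k := by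
  obtain ⟨x, hx0, hxA, hxB⟩ := exists_test_vector hA hB k
  have h1 := qf_ge_of_mem_span hA k hxA
  have h2 := qf_le_of_mem_span hB k hxB
  have hn : 0 < ‖x‖ ^ 2 := pow_pos (norm_pos_iff.mpr hx0) 2
  nlinarith [h x]

lemma qf_nonneg_of_posSemidef {N : Matn n} (hN : N.PosSemidef) (x : En n) :
    0 ≤ qf N x := by
  have := hN.dotProduct_mulVec_nonneg (WithLp.equiv 2 (Fin n → ℝ) x)
  simpa [qf, EuclideanSpace.inner_eq_star_dotProduct,
    Matrix.ofLp_toEuclideanLin_apply, dotProduct_comm (N *ᵥ (WithLp.ofLp x))] using this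

lemma qf_add (A B : Matn n) (x : En n) : qf (A + B) x = qf A x + qf B x := by
  simp [qf, map_add, inner_add_right]

lemma qf_sub (A B : Matn n) (x : En n) : qf (A - B) x = qf A x - qf B x := by
  simp [qf, map_sub, inner_sub_right]

/-- Weyl monotonicity. -/
lemma eigs_le_eigs_add_psd {M N : Matn n} (hM : M.IsHermitian) (hN : N.PosSemidef)
    (k : Fin n) : eigs M k ≤ eigs (M + N) k := by
  refine eigs_le_eigs_of_qf_le hM (hM.add hN.1) k fun x => ?_
  have := qf_nonneg_of_posSemidef hN x
  rw [qf_add]; linarith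

lemma abs_qf_le_frob (E : Matn n) (x : En n) : |qf E x| ≤ frobNorm E * ‖x‖ ^ 2 := by
  have hq : qf E x = ∑ p : Fin n × Fin n, E p.1 p.2 * (x p.1 * x p.2) := by
    rw [qf, EuclideanSpace.inner_eq_star_dotProduct]
    simp only [Matrix.ofLp_toEuclideanLin_apply]
    rw [Fintype.sum_prod_type]
    simp only [dotProduct, Matrix.mulVec, dotProduct, Pi.star_apply,
      star_trivial]
    refine Finset.sum_congr rfl fun i _ => ?_
    rw [Finset.sum_mul]
    refine Finset.sum_congr rfl fun j _ => ?_
    show E i j * x j * x i = E i j * (x i * x j)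
    ring
  have cs := Finset.sum_mul_sq_le_sq_mul_sq Finset.univ
    (fun p : Fin n × Fin n => E p.1 p.2) (fun p => x p.1 * x p.2)
  have hE : ∑ p : Fin n × Fin n, (E p.1 p.2) ^ 2 = frobNorm E ^ 2 := by
    rw [frobNorm, Real.sq_sqrt (by positivity), Fintype.sum_prod_type]
  have hx : ∑ p : Fin n × Fin n, (x p.1 * x p.2) ^ 2 = (‖x‖ ^ 2) ^ 2 := by
    rw [Fintype.sum_prod_type, norm_sq_eq_sum, sq, Finset.sum_mul_sum]
    refine Finset.sum_congr rfl fun i _ => Finset.sum_congr rfl fun j _ => ?_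
    show (x i * x j) ^ 2 = x i ^ 2 * x j ^ 2
    ring
  have hb : 0 ≤ frobNorm E * ‖x‖ ^ 2 := by
    have : 0 ≤ frobNorm E := Real.sqrt_nonneg _
    positivity
  have h2 : (qf E x) ^ 2 ≤ (frobNorm E * ‖x‖ ^ 2) ^ 2 := by
    rw [hq, mul_pow, ← hE, ← hx]
    exact cs
  nlinarith [abs_nonneg (qf E x), sq_abs (qf E x)]

/-- One-sided Weyl perturbation bound. -/
lemma eigs_le_eigs_add_frob {A B : Matn n} (hA : A.IsHermitian) (hB : B.IsHermitian)
    (k : Fin n) : eigs A k ≤ eigs B k + frobNorm (A - B) := by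
  obtain ⟨x, hx0, hxA, hxB⟩ := exists_test_vector hA hB k
  have h1 := qf_ge_of_mem_span hA k hxA
  have h2 := qf_le_of_mem_span hB k hxB
  have h3 : qf A x = qf B x + qf (A - B) x := by rw [qf_sub]; ring
  have h4 : |qf (A - B) x| ≤ frobNorm (A - B) * ‖x‖ ^ 2 := abs_qf_le_frob _ _
  have hn : 0 < ‖x‖ ^ 2 := pow_pos (norm_pos_iff.mpr hx0) 2
  nlinarith [abs_nonneg (qf (A - B) x), le_abs_self (qf (A - B) x)]

lemma frobNorm_sub_comm (A B : Matn n) : frobNorm (A - B) = frobNorm (B - A) := by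
  unfold frobNorm
  congr 1
  refine Finset.sum_congr rfl fun i _ => Finset.sum_congr rfl fun j _ => ?_
  have : (A - B) i j = -((B - A) i j) := by
    simp [Matrix.sub_apply]
  rw [this, neg_sq]

lemma abs_eigs_sub_le_frob {A B : Matn n} (hA : A.IsHermitian) (hB : B.IsHermitian)
    (k : Fin n) : |eigs A k - eigs B k| ≤ frobNorm (A - B) := by
  rw [abs_le]
  constructor
  · have := eigs_le_eigs_add_frob hB hA k
    rw [frobNorm_sub_comm] at this
    linarith
  · have := eigs_le_eigs_add_frob hA hB k
    linarith

lemma frobNorm_nonneg (A : Matn n) : 0 ≤ frobNorm A := Real.sqrt_nonneg _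

lemma isHermitian_of_isSymm {M : Matn n} (hM : M.IsSymm) : M.IsHermitian := by
  rw [Matrix.IsHermitian, Matrix.conjTranspose_eq_transpose_of_trivial]
  exact hM

/-- Continuity of the sorted eigenvalue map on symmetric matrices. -/
lemma eigs_continuousOn : ContinuousOn (eigs : Matn n → En n) {M | M.IsSymm} := by
  intro M hM
  have hMh : M.IsHermitian := isHermitian_of_isSymm hM
  have hfrob : Continuous (fun A : Matn n => frobNorm (A - M)) := by
    apply Real.continuous_sqrt.comp
    refine continuous_finset_sum _ fun i _ => continuous_finset_sum _ fun j _ => ?_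
    have : Continuous (fun A : Matn n => A i j) :=
      (continuous_apply j).comp (continuous_apply i)
    exact ((this.sub continuous_const).pow 2)
  have htend : Filter.Tendsto (fun A : Matn n => Real.sqrt n * frobNorm (A - M))
      (nhdsWithin M {M' : Matn n | M'.IsSymm}) (nhds 0) := by
    have h0 : Real.sqrt n * frobNorm (M - M) = 0 := by
      simp [frobNorm]
    have hc : Continuous (fun A : Matn n => Real.sqrt n * frobNorm (A - M)) :=
      continuous_const.mul hfrob
    have := (hc.tendsto M).mono_left
      (nhdsWithin_le_nhds (s := {M' : Matn n | M'.IsSymm}))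
    rwa [h0] at this
  rw [ContinuousWithinAt, tendsto_iff_dist_tendsto_zero]
  apply squeeze_zero' (Filter.Eventually.of_forall fun A => dist_nonneg) _ htend
  filter_upwards [self_mem_nhdsWithin] with A hA
  have hAh : A.IsHermitian := isHermitian_of_isSymm hA
  rw [dist_eq_norm]
  have hcomp : ∀ k, |eigs A k - eigs M k| ≤ frobNorm (A - M) :=
    fun k => abs_eigs_sub_le_frob hAh hMh k
  have h1 : ‖eigs A - eigs M‖ ^ 2 ≤ (n : ℝ) * frobNorm (A - M) ^ 2 := by
    rw [norm_sq_eq_sum]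
    calc ∑ k, ((eigs A - eigs M) k) ^ 2 ≤ ∑ _k : Fin n, frobNorm (A - M) ^ 2 := by
          refine Finset.sum_le_sum fun k _ => ?_
          have h := hcomp k
          have : (eigs A - eigs M) k = eigs A k - eigs M k := rfl
          rw [this]
          nlinarith [abs_nonneg (eigs A k - eigs M k), sq_abs (eigs A k - eigs M k),
            frobNorm_nonneg (A - M)]
      _ = (n : ℝ) * frobNorm (A - M) ^ 2 := by simp [mul_comm]
  have hrhs : 0 ≤ Real.sqrt n * frobNorm (A - M) := by
    have := frobNorm_nonneg (A - M)
    positivity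
  nlinarith [norm_nonneg (eigs A - eigs M), Real.sq_sqrt (by positivity : (0:ℝ) ≤ (n:ℝ)),
    Real.sqrt_nonneg (n : ℝ)]

lemma trace_eq_sum_eigenvalues {M : Matn n} (hM : M.IsHermitian) :
    M.trace = ∑ i, hM.eigenvalues i := by
  nth_rewrite 1 [hM.spectral_theorem]
  rw [Unitary.conjStarAlgAut_apply, Matrix.trace_mul_comm, ← Matrix.mul_assoc, Unitary.coe_star_mul_self, Matrix.one_mul,
    Matrix.trace_diagonal]
  simp

lemma trace_eq_sum_eigs {M : Matn n} (hM : M.IsHermitian) :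
    M.trace = ∑ i, eigs M i := by
  rw [trace_eq_sum_eigenvalues hM, eigs_eq hM]
  exact (Fintype.sum_equiv (Tuple.sort hM.eigenvalues) _ _ fun i => rfl).symm

lemma sum_sq_entries_eq_sum_sq_eigenvalues {M : Matn n} (hM : M.IsHermitian) :
    ∑ i, ∑ j, (M i j) ^ 2 = ∑ i, (hM.eigenvalues i) ^ 2 := by
  have hsymmentry : ∀ i j, M j i = M i j := by
    intro i j
    conv_lhs => rw [← hM.eq]
    simp [Matrix.conjTranspose_apply]
  have h1 : ∑ i, ∑ j, (M i j) ^ 2 = (M * M).trace := by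
    rw [Matrix.trace]
    refine (Finset.sum_congr rfl fun i _ => ?_).symm
    rw [Matrix.diag_apply, Matrix.mul_apply]
    refine Finset.sum_congr rfl fun j _ => ?_
    rw [hsymmentry i j, sq]
  have h2 : (M * M).trace = ∑ i, (hM.eigenvalues i) ^ 2 := by
    have hsp := hM.spectral_theorem
    rw [Unitary.conjStarAlgAut_apply] at hsp
    set U : Matn n := (hM.eigenvectorUnitary : Matn n) with hU
    set D : Matn n := Matrix.diagonal (RCLike.ofReal ∘ hM.eigenvalues) with hD
    conv_lhs => rw [hsp]
    have hsu : star U * U = 1 := Unitary.coe_star_mul_self hM.eigenvectorUnitary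
    have : U * D * star U * (U * D * star U) = U * (D * D) * star U := by
      calc U * D * star U * (U * D * star U)
          = U * D * (star U * U) * D * star U := by
            simp only [Matrix.mul_assoc]
        _ = U * (D * D) * star U := by rw [hsu]; simp only [Matrix.mul_assoc, Matrix.mul_one]
    rw [this, Matrix.trace_mul_comm, ← Matrix.mul_assoc, hsu, Matrix.one_mul, hD,
      Matrix.diagonal_mul_diagonal, Matrix.trace_diagonal]
    simp [sq]
  rw [h1, h2]

lemma frobNorm_le_trace_of_posSemidef {N : Matn n} (hN : N.PosSemidef) :
    frobNorm N ≤ N.trace := by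
  have hev := hN.eigenvalues_nonneg
  rw [frobNorm, sum_sq_entries_eq_sum_sq_eigenvalues hN.1, trace_eq_sum_eigenvalues hN.1]
  have hsum : 0 ≤ ∑ i, hN.1.eigenvalues i := Finset.sum_nonneg fun i _ => hev i
  calc Real.sqrt (∑ i, (hN.1.eigenvalues i) ^ 2)
      ≤ Real.sqrt ((∑ i, hN.1.eigenvalues i) ^ 2) :=
        Real.sqrt_le_sqrt (Finset.sum_sq_le_sq_sum_of_nonneg fun i _ => hev i)
    _ = ∑ i, hN.1.eigenvalues i := Real.sqrt_sq hsum

end EigsHelpers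

/-- Local strict ellipticity transfers from `f` to the matrix operator
`F(M) = f(λ(M))` on `U = {M ∈ Symₙ : λ(M) ∈ Γ}`. -/
theorem local_strict_ellipticity_transfer_to_matrices {n : ℕ} (hn : 1 ≤ n)
    (Γ : Set (En n)) (hΓne : Γ.Nonempty) (hΓo : IsOpen Γ)
    (f : En n → ℝ) (hfc : ContinuousOn f (closure Γ))
    (h1 : SymmCond Γ f) (h2 : EllCond Γ f) (h3 : StrictEllCond Γ f) :
    ∀ K : Set (Matn n), K ⊆ {M : Matn n | M.IsSymm ∧ eigs M ∈ Γ} → IsCompact K →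
      ∃ δ > 0, ∀ M ∈ K, ∀ N : Matn n, N.PosSemidef →
        δ * frobNorm N ≤ f (eigs (M + N)) - f (eigs M) := by
  intro K hKsub hKcomp
  have hKsymm : K ⊆ {M : Matn n | M.IsSymm} := fun M hM => (hKsub hM).1
  have hK' : IsCompact (eigs '' K) :=
    hKcomp.image_of_continuousOn (eigs_continuousOn.mono hKsymm)
  have hK'sub : eigs '' K ⊆ Γ := by rintro - ⟨M, hM, rfl⟩; exact (hKsub hM).2
  obtain ⟨δ₀, hδ₀, hδ⟩ := h3 (eigs '' K) hK'sub hK'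
  have hn0 : (0:ℝ) < (n:ℝ) := by exact_mod_cast Nat.lt_of_lt_of_le Nat.zero_lt_one hn
  have hsn : 0 < Real.sqrt n := Real.sqrt_pos.2 hn0
  refine ⟨δ₀ / Real.sqrt n, div_pos hδ₀ hsn, ?_⟩
  intro M hM N hN
  have hMh : M.IsHermitian := isHermitian_of_isSymm (hKsub hM).1
  have hBh : (M + N).IsHermitian := hMh.add hN.1
  set μ : En n := eigs (M + N) - eigs M with hμdef
  have hμ : ∀ i, 0 ≤ μ i := by
    intro i
    have h := eigs_le_eigs_add_psd hMh hN i
    have hco : μ i = eigs (M + N) i - eigs M i := rfl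
    rw [hco]; linarith
  have hadd : eigs M + μ = eigs (M + N) := by rw [hμdef]; abel
  have happ := hδ (eigs M) ⟨M, hM, rfl⟩ μ hμ
  rw [hadd] at happ
  have htr : ∑ i, μ i = N.trace := by
    have h1 : ∑ i, μ i = ∑ i, (eigs (M + N) i - eigs M i) :=
      Finset.sum_congr rfl fun i _ => rfl
    rw [h1, Finset.sum_sub_distrib, ← trace_eq_sum_eigs hBh, ← trace_eq_sum_eigs hMh,
      Matrix.trace_add]
    ring
  have hfrob : frobNorm N ≤ ∑ i, μ i := htr ▸ frobNorm_le_trace_of_posSemidef hN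
  have hsumle : ∑ i, μ i ≤ Real.sqrt n * ‖μ‖ := by
    have cs := Finset.sum_mul_sq_le_sq_mul_sq Finset.univ (fun _ : Fin n => (1:ℝ)) μ
    simp only [one_mul, one_pow] at cs
    have hsq : ‖μ‖ ^ 2 = ∑ i, μ i ^ 2 := norm_sq_eq_sum μ
    have hcard : (∑ _i : Fin n, (1:ℝ)) = (n:ℝ) := by simp
    rw [hcard, ← hsq] at cs
    have hA : 0 ≤ ∑ i, μ i := Finset.sum_nonneg fun i _ => hμ i
    calc ∑ i, μ i = Real.sqrt ((∑ i, μ i) ^ 2) := (Real.sqrt_sq hA).symm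
      _ ≤ Real.sqrt ((n : ℝ) * ‖μ‖ ^ 2) := Real.sqrt_le_sqrt cs
      _ = Real.sqrt n * Real.sqrt (‖μ‖ ^ 2) := Real.sqrt_mul (le_of_lt hn0) _
      _ = Real.sqrt n * ‖μ‖ := by rw [Real.sqrt_sq (norm_nonneg μ)]
  have hnorm : frobNorm N ≤ Real.sqrt n * ‖μ‖ := le_trans hfrob hsumle
  have key : δ₀ / Real.sqrt n * frobNorm N ≤ δ₀ * ‖μ‖ := by
    calc δ₀ / Real.sqrt n * frobNorm N
        ≤ δ₀ / Real.sqrt n * (Real.sqrt n * ‖μ‖) :=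
          mul_le_mul_of_nonneg_left hnorm (le_of_lt (div_pos hδ₀ hsn))
      _ = δ₀ * ‖μ‖ := by field_simp
  linarith
end
end

section
/- Monotonicity along rays from the moving sphere inequality: Let n ≥ 3, let v : ℝⁿ → (0,∞), and let x₀ ∈ ℝⁿ. Suppose that for every λ > 0 and every y with |y - x₀| ≥ λ one has v_{x₀,λ}(y) ≤ v(y). Then for every unit vector e ∈ ℝⁿ, the function r ↦ r^{(n-2)/2} v(x₀ + re) is nondecreasing on (0,∞); that is, for all 0 < r₁ ≤ r₂, r₁^{(n-2)/2} v(x₀ + r₁ e) ≤ r₂^{(n-2)/2} v(x₀ + r₂ e). -/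
open Filter Set Metric Topology Asymptotics MeasureTheory Matrix
open scoped Classical ENNReal NNReal

noncomputable section

/-- Monotonicity along rays from the moving sphere inequality. -/
theorem moving_sphere_monotonicity {n : ℕ} (hn : 3 ≤ n)
    (v : En n → ℝ) (hvpos : ∀ y, 0 < v y) (x₀ : En n)
    (hms : ∀ l : ℝ, 0 < l → ∀ y : En n, l ≤ ‖y - x₀‖ → kelvin v x₀ l y ≤ v y) :
    ∀ e : En n, ‖e‖ = 1 → ∀ r₁ r₂ : ℝ, 0 < r₁ → r₁ ≤ r₂ →
      r₁ ^ (((n : ℝ) - 2) / 2) * v (x₀ + r₁ • e) ≤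
        r₂ ^ (((n : ℝ) - 2) / 2) * v (x₀ + r₂ • e) := by
  intro e he r₁ r₂ hr₁ hle
  have hr₂ : 0 < r₂ := hr₁.trans_le hle
  set l := Real.sqrt (r₁ * r₂) with hl
  have hrr : 0 < r₁ * r₂ := mul_pos hr₁ hr₂
  have hlpos : 0 < l := Real.sqrt_pos.2 hrr
  have hl2 : l ^ 2 = r₁ * r₂ := Real.sq_sqrt hrr.le
  have hnorm : ‖(x₀ + r₂ • e) - x₀‖ = r₂ := by
    simp [norm_smul, he, abs_of_pos hr₂]
  have hll : l ≤ r₂ := by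
    rw [hl]
    calc Real.sqrt (r₁ * r₂) ≤ Real.sqrt (r₂ * r₂) :=
          Real.sqrt_le_sqrt (by nlinarith)
      _ = r₂ := Real.sqrt_mul_self hr₂.le
  have key := hms l hlpos (x₀ + r₂ • e) (by rw [hnorm]; exact hll)
  rw [kelvin] at key
  have hsub : x₀ + r₂ • e - x₀ = r₂ • e := by abel
  have harg : x₀ + (l ^ 2 / ‖x₀ + r₂ • e - x₀‖ ^ 2) • (x₀ + r₂ • e - x₀)
      = x₀ + r₁ • e := by
    rw [hnorm, hsub, smul_smul, hl2,
      show r₁ * r₂ / r₂ ^ 2 * r₂ = r₁ from by field_simp]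
  rw [harg, hnorm] at key
  set a : ℝ := ((n : ℝ) - 2) / 2 with ha
  have hcast : ((n - 2 : ℕ) : ℝ) = (n : ℝ) - 2 := by
    have h2 : (2 : ℕ) ≤ n := by omega
    push_cast [Nat.cast_sub h2]
    ring
  have hlpow : l ^ (n - 2) = r₁ ^ a * r₂ ^ a := by
    have h1 : l ^ (n - 2) = l ^ (((n : ℝ) - 2)) := by
      rw [← Real.rpow_natCast l (n - 2), hcast]
    rw [h1, hl, Real.sqrt_eq_rpow, ← Real.rpow_mul hrr.le,
      show (1 / 2 : ℝ) * ((n : ℝ) - 2) = a from by rw [ha]; ring,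
      Real.mul_rpow hr₁.le hr₂.le]
  have hrpow : r₂ ^ (n - 2) = r₂ ^ a * r₂ ^ a := by
    have h1 : r₂ ^ (n - 2) = r₂ ^ (((n : ℝ) - 2)) := by
      rw [← Real.rpow_natCast r₂ (n - 2), hcast]
    rw [h1, ← Real.rpow_add hr₂]
    congr 1
    ring
  rw [hlpow, hrpow] at key
  have hA : 0 < r₁ ^ a := Real.rpow_pos_of_pos hr₁ a
  have hB : 0 < r₂ ^ a := Real.rpow_pos_of_pos hr₂ a
  have hv₁ : 0 < v (x₀ + r₁ • e) := hvpos _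
  set A := r₁ ^ a
  set B := r₂ ^ a
  set v₁ := v (x₀ + r₁ • e)
  set v₂ := v (x₀ + r₂ • e)
  have key' : A * B * v₁ ≤ B * B * v₂ := by
    calc A * B * v₁ = B * B * (A * B / (B * B) * v₁) := by
          field_simp
      _ ≤ B * B * v₂ := mul_le_mul_of_nonneg_left key (mul_pos hB hB).le
  have : A * v₁ ≤ B * v₂ := by
    have hBpos := hB
    nlinarith
  exact this
end
end

section
/- If the moving sphere inequality holds for all radii at one point, the function blows up at rate |y|^{n-2} at infinity: Let n ≥ 3, let v : ℝⁿ → (0,∞) be continuous, and let x₀ ∈ ℝⁿ. Suppose that for every λ > 0 and every y with |y - x₀| ≥ λ one has v_{x₀,λ}(y) ≤ v(y). Then |y|^{n-2} v(y) → ∞ as |y| → ∞; in particular liminf_{|y|→∞} |y|^{n-2} v(y) = ∞. -/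
open Filter Set Metric Topology Asymptotics MeasureTheory Matrix
open scoped Classical ENNReal NNReal

noncomputable section

/-- If the moving sphere inequality holds for all radii at one point, then
`|y|^{n-2} v(y) → ∞` as `|y| → ∞`. -/
theorem moving_sphere_all_radii_blowup {n : ℕ} (hn : 3 ≤ n)
    (v : En n → ℝ) (hvc : Continuous v) (hvpos : ∀ y, 0 < v y) (x₀ : En n)
    (hms : ∀ l : ℝ, 0 < l → ∀ y : En n, l ≤ ‖y - x₀‖ → kelvin v x₀ l y ≤ v y) :
    Tendsto (fun y : En n => ‖y‖ ^ (n - 2) * v y) (cocompact (En n)) atTop := by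
  obtain ⟨z0, _, hz0min⟩ :=
    (isCompact_closedBall x₀ 1).exists_isMinOn ⟨x₀, by simp⟩ hvc.continuousOn
  set m : ℝ := v z0 with hmdef
  have hm0 : 0 < m := hvpos z0
  rw [Filter.tendsto_atTop]
  intro C
  set l : ℝ := max 1 ((2 ^ (n - 2) * max C 1) / m) with hldef
  have hl1 : 1 ≤ l := le_max_left _ _
  have hl0 : (0 : ℝ) < l := lt_of_lt_of_le one_pos hl1
  have hlC : C ≤ l ^ (n - 2) * m / 2 ^ (n - 2) := by
    have h1 : (2 : ℝ) ^ (n - 2) * max C 1 / m ≤ l := le_max_right _ _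
    have h2 : (2 : ℝ) ^ (n - 2) * max C 1 ≤ l * m := by
      rw [div_le_iff₀ hm0] at h1; linarith
    have h3 : l ≤ l ^ (n - 2) := by
      have : 1 ≤ n - 2 := by omega
      calc l = l ^ 1 := (pow_one l).symm
        _ ≤ l ^ (n - 2) := pow_le_pow_right₀ hl1 this
    have h4 : (2 : ℝ) ^ (n - 2) * C ≤ l ^ (n - 2) * m := by
      have hCm : C ≤ max C 1 := le_max_left _ _
      have := mul_le_mul_of_nonneg_left hCm (by positivity : (0:ℝ) ≤ 2 ^ (n-2))
      have hlm : l * m ≤ l ^ (n - 2) * m := mul_le_mul_of_nonneg_right h3 hm0.le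
      linarith
    rw [le_div_iff₀ (by positivity : (0:ℝ) < 2 ^ (n-2))]
    linarith
  have hev : ∀ᶠ y : En n in cocompact (En n),
      max (l ^ 2) (2 * ‖x₀‖) + ‖x₀‖ ≤ ‖y‖ :=
    tendsto_norm_cocompact_atTop.eventually_ge_atTop _
  filter_upwards [hev] with y hy
  set R : ℝ := ‖y - x₀‖ with hRdef
  have hRy : ‖y‖ - ‖x₀‖ ≤ R := by
    have := norm_sub_norm_le y x₀; linarith [this]
  have hR : max (l ^ 2) (2 * ‖x₀‖) ≤ R := by linarith
  have hRl2 : l ^ 2 ≤ R := le_trans (le_max_left _ _) hR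
  have hRx : 2 * ‖x₀‖ ≤ R := le_trans (le_max_right _ _) hR
  have hR0 : (0 : ℝ) < R := lt_of_lt_of_le (by positivity) hRl2
  have hRl : l ≤ R := by nlinarith
  have harg : x₀ + (l ^ 2 / ‖y - x₀‖ ^ 2) • (y - x₀) ∈ closedBall x₀ 1 := by
    rw [mem_closedBall, dist_eq_norm, add_sub_cancel_left, norm_smul,
      Real.norm_eq_abs, abs_of_nonneg (by positivity)]
    have heq : l ^ 2 / R ^ 2 * R = l ^ 2 / R := by
      field_simp
    rw [← hRdef, heq, div_le_one hR0]
    exact hRl2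
  have hvm : m ≤ v (x₀ + (l ^ 2 / ‖y - x₀‖ ^ 2) • (y - x₀)) := hz0min harg
  have hkel := hms l hl0 y hRl
  rw [kelvin] at hkel
  have hkey : l ^ (n - 2) / R ^ (n - 2) * m ≤ v y := by
    refine le_trans ?_ hkel
    rw [← hRdef]
    exact mul_le_mul_of_nonneg_left hvm (by positivity)
  have hy2 : R / 2 ≤ ‖y‖ := by
    have := norm_sub_le y x₀
    rw [← hRdef] at this
    linarith
  have hyn : (R / 2) ^ (n - 2) ≤ ‖y‖ ^ (n - 2) :=
    pow_le_pow_left₀ (by positivity) hy2 _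
  calc C ≤ l ^ (n - 2) * m / 2 ^ (n - 2) := hlC
    _ = (R / 2) ^ (n - 2) * (l ^ (n - 2) / R ^ (n - 2) * m) := by
        rw [div_pow]; field_simp
    _ ≤ ‖y‖ ^ (n - 2) * (l ^ (n - 2) / R ^ (n - 2) * m) := by
        apply mul_le_mul_of_nonneg_right hyn; positivity
    _ ≤ ‖y‖ ^ (n - 2) * v y :=
        mul_le_mul_of_nonneg_left hkey (by positivity)
end
end
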